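/- For any two m-dimensional subspaces V and W of ℂ^n, there exist orthonormal bases (v_i) of V and (w_j) of W and nonnegative real numbers c_1, ..., c_m (the cosines of the principal angles) such that ⟨v_i, w_j⟩ = c_i · δ_{ij} for all i, j. -/

import Mathlib

open Module Submodule ComplexInnerProductSpace

theorem aux_stmt0 (E : Type*) [NormedAddCommGroup E] [InnerProductSpace ℂ E]
    [FiniteDimensional ℂ E] (m : ℕ) (V W : Submodule ℂ E)
    (hV : Module.finrank ℂ V = m) (hW : Module.finrank ℂ W = m) :
    ∃ (v w : Fin m → E) (c : Fin m → ℝ),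
      (∀ i, v i ∈ V) ∧ (∀ i, w i ∈ W) ∧
      Orthonormal ℂ v ∧ Orthonormal ℂ w ∧
      Submodule.span ℂ (Set.range v) = V ∧
      Submodule.span ℂ (Set.range w) = W ∧
      (∀ i, 0 ≤ c i) ∧
      (∀ i j, (inner ℂ (v i) (w j) : ℂ) = if i = j then (c i : ℂ) else 0) := by
  classical
  let T : V →ₗ[ℂ] W := (orthogonalProjection W).toLinearMap.comp V.subtype
  let S : V →ₗ[ℂ] V := (orthogonalProjection V).toLinearMap.comp (W.subtype.comp T)
  have hkey0 : ∀ x y : V, (inner ℂ x (S y) : ℂ) = inner ℂ (T x) (T y) := by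
    intro x y
    show ⟪x, orthogonalProjection V ((T y : E))⟫ = ⟪T x, T y⟫
    rw [inner_orthogonalProjection_eq_of_mem_left]
    show _ = ⟪orthogonalProjection W (x : E), T y⟫
    rw [inner_orthogonalProjection_eq_of_mem_right]
  have hkey1 : ∀ x y : V, (inner ℂ (S x) y : ℂ) = inner ℂ (T x) (T y) := by
    intro x y
    show ⟪orthogonalProjection V ((T x : E)), y⟫ = ⟪T x, T y⟫
    rw [inner_orthogonalProjection_eq_of_mem_right]
    show _ = ⟪T x, orthogonalProjection W (y : E)⟫
    rw [inner_orthogonalProjection_eq_of_mem_left]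
  have hS : S.IsSymmetric := fun x y => (hkey1 x y).trans (hkey0 x y).symm
  let b : OrthonormalBasis (Fin m) ℂ V := hS.eigenvectorBasis hV
  let μ : Fin m → ℝ := hS.eigenvalues hV
  have key : ∀ i j, ⟪T (b i), T (b j)⟫ = if i = j then (μ j : ℂ) else 0 := by
    intro i j
    rw [← hkey0]
    rw [show S (b j) = (μ j : ℂ) • b j from hS.apply_eigenvectorBasis hV j,
      inner_smul_right, orthonormal_iff_ite.mp b.orthonormal]
    by_cases h : i = j <;> simp [h]
  have hμ : ∀ i, μ i = ‖T (b i)‖ ^ 2 := by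
    intro i
    have h2 := key i i
    rw [if_pos rfl, inner_self_eq_norm_sq_to_K] at h2
    have h3 : ((μ i : ℂ)) = ((‖T (b i)‖ ^ 2 : ℝ) : ℂ) := by
      rw [Complex.ofReal_pow]; exact h2.symm
    exact Complex.ofReal_injective h3
  set c : Fin m → ℝ := fun i => ‖T (b i)‖ with hc
  have hc2 : ∀ i, μ i = c i ^ 2 := hμ
  have hcnn : ∀ i, 0 ≤ c i := fun i => norm_nonneg _
  -- normalized images
  let u : {i : Fin m // c i ≠ 0} → W := fun i => ((c i : ℂ))⁻¹ • T (b i)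
  have hu : Orthonormal ℂ u := by
    rw [orthonormal_iff_ite]
    intro i j
    show ⟪((c i : ℂ))⁻¹ • T (b (i : Fin m)), ((c j : ℂ))⁻¹ • T (b (j : Fin m))⟫ = _
    rw [inner_smul_left, inner_smul_right, key]
    by_cases h : i = j
    · subst h
      simp only [if_pos rfl, Subtype.coe_eta, ↓reduceIte]
      rw [hc2]
      simp only [map_inv₀, Complex.conj_ofReal]
      push_cast
      have : (c i : ℂ) ≠ 0 := by exact_mod_cast i.2
      field_simp
    · have h' : (i : Fin m) ≠ (j : Fin m) := fun hh => h (Subtype.ext hh)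
      simp [h', h]
  let K : Submodule ℂ W := Submodule.span ℂ (Set.range u)
  have hTK : ∀ i, T (b i) ∈ K := by
    intro i
    by_cases h : c i = 0
    · have : ‖T (b i)‖ = 0 := h
      rw [norm_eq_zero] at this
      rw [this]; exact K.zero_mem
    · have : T (b i) = (c i : ℂ) • u ⟨i, h⟩ := by
        simp only [u, smul_smul]
        rw [mul_inv_cancel₀ (by exact_mod_cast h), one_smul]
      rw [this]
      exact K.smul_mem _ (subset_span (Set.mem_range_self _))
  have hKrank : finrank ℂ K = Fintype.card {i : Fin m // c i ≠ 0} := by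
    rw [finrank_span_eq_card hu.linearIndependent]
  have hWfin : finrank ℂ W = m := hW
  have hKorth : finrank ℂ Kᗮ = Fintype.card {i : Fin m // c i = 0} := by
    have h1 := Submodule.finrank_add_finrank_orthogonal K
    rw [hKrank, hWfin] at h1
    have h2 : Fintype.card {i : Fin m // c i ≠ 0}
        = m - Fintype.card {i : Fin m // c i = 0} := by
      classical
      have := Fintype.card_subtype_compl (fun i : Fin m => c i = 0)
      simp only [Fintype.card_fin] at this
      exact this
    have hle : Fintype.card {i : Fin m // c i = 0} ≤ m := by
      have := Fintype.card_subtype_le (fun i : Fin m => c i = 0)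
      simpa using this
    omega
  let ζ : {i : Fin m // c i = 0} ≃ Fin (finrank ℂ Kᗮ) :=
    Fintype.equivFinOfCardEq hKorth.symm
  let e : OrthonormalBasis (Fin (finrank ℂ Kᗮ)) ℂ Kᗮ := stdOrthonormalBasis ℂ Kᗮ
  let w' : Fin m → W := fun i =>
    if h : c i = 0 then (e (ζ ⟨i, h⟩) : W) else u ⟨i, h⟩
  have hmemK : ∀ (i) (h : ¬ c i = 0), w' i ∈ K := by
    intro i h
    simp only [w', dif_neg h]
    exact subset_span (Set.mem_range_self _)
  have hmemKo : ∀ (i) (h : c i = 0), w' i ∈ Kᗮ := by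
    intro i h
    simp only [w', dif_pos h]
    exact (e (ζ ⟨i, h⟩)).2
  have hw'on : Orthonormal ℂ w' := by
    rw [orthonormal_iff_ite]
    intro i j
    by_cases hi : c i = 0 <;> by_cases hj : c j = 0
    · simp only [w', dif_pos hi, dif_pos hj]
      rw [← Submodule.coe_inner, orthonormal_iff_ite.mp e.orthonormal]
      by_cases h : i = j
      · simp [h]
      · have : ζ ⟨i, hi⟩ ≠ ζ ⟨j, hj⟩ := by
          intro hh
          exact h (congrArg Subtype.val (ζ.injective hh))
        simp [this, h]
    · have h : i ≠ j := fun hh => hj (hh ▸ hi)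
      rw [Submodule.inner_left_of_mem_orthogonal (hmemK j hj) (hmemKo i hi)]
      simp [h]
    · have h : i ≠ j := fun hh => hi (hh ▸ hj)
      rw [Submodule.inner_right_of_mem_orthogonal (hmemK i hi) (hmemKo j hj)]
      simp [h]
    · simp only [w', dif_neg hi, dif_neg hj]
      rw [orthonormal_iff_ite.mp hu]
      by_cases h : i = j
      · simp [h]
      · have : (⟨i, hi⟩ : {i : Fin m // c i ≠ 0}) ≠ ⟨j, hj⟩ := fun hh =>
          h (congrArg Subtype.val hh)
        simp [this, h]
  -- final data
  refine ⟨fun i => (b i : E), fun i => (w' i : E), c, fun i => (b i).2, fun i => (w' i).2,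
    ?_, ?_, ?_, ?_, hcnn, ?_⟩
  · exact b.orthonormal.comp_linearIsometry V.subtypeₗᵢ
  · exact hw'on.comp_linearIsometry W.subtypeₗᵢ
  · have : Set.range (fun i => ((b i : E))) = V.subtype '' Set.range b := by
      ext x; simp [Set.range_comp]
    have hbs : Submodule.span ℂ (Set.range ⇑b) = ⊤ := by
      rw [← b.coe_toBasis]; exact b.toBasis.span_eq
    rw [this, ← Submodule.map_span, hbs]
    simp [Submodule.map_top, Submodule.range_subtype]
  · have hspan : Submodule.span ℂ (Set.range w') = (⊤ : Submodule ℂ W) := by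
      apply hw'on.linearIndependent.span_eq_top_of_card_eq_finrank'
      simp [hWfin]
    have : Set.range (fun i => ((w' i : E))) = W.subtype '' Set.range w' := by
      ext x; simp [Set.range_comp]
    rw [this, ← Submodule.map_span, hspan]
    simp [Submodule.map_top, Submodule.range_subtype]
  · intro i j
    have step1 : (inner ℂ ((b i : E)) ((w' j : E)) : ℂ) = ⟪T (b i), w' j⟫ := by
      show _ = ⟪orthogonalProjection W (b i : E), w' j⟫
      rw [inner_orthogonalProjection_eq_of_mem_right]
    rw [step1]
    by_cases hj : c j = 0
    · rw [Submodule.inner_right_of_mem_orthogonal (hTK i) (hmemKo j hj)]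
      by_cases h : i = j
      · subst h; simp [hj]
      · simp [h]
    · simp only [w', dif_neg hj, u, inner_smul_right, key]
      by_cases h : i = j
      · subst h
        rw [if_pos rfl, if_pos rfl, hc2]
        push_cast
        have : (c i : ℂ) ≠ 0 := by exact_mod_cast hj
        field_simp
      · simp [h]

/-- For any two `m`-dimensional subspaces `V`, `W` of `ℂ^n`, there exist
orthonormal bases `(v i)` of `V` and `(w j)` of `W` and nonnegative reals `c i`
(cosines of the principal angles) with `⟨v i, w j⟩ = c i · δ_{ij}`. -/
theorem stmt0 (n m : ℕ) (V W : Submodule ℂ (EuclideanSpace ℂ (Fin n)))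
    (hV : Module.finrank ℂ V = m) (hW : Module.finrank ℂ W = m) :
    ∃ (v w : Fin m → EuclideanSpace ℂ (Fin n)) (c : Fin m → ℝ),
      (∀ i, v i ∈ V) ∧ (∀ i, w i ∈ W) ∧
      Orthonormal ℂ v ∧ Orthonormal ℂ w ∧
      Submodule.span ℂ (Set.range v) = V ∧
      Submodule.span ℂ (Set.range w) = W ∧
      (∀ i, 0 ≤ c i) ∧
      (∀ i j, (inner ℂ (v i) (w j) : ℂ) = if i = j then (c i : ℂ) else 0) := by
  exact aux_stmt0 (EuclideanSpace ℂ (Fin n)) m V W hV hW
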